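/- On the N-photon Fock space with M modes, the generalized Pauli operator Λ_j = X Z^j satisfies Λ_j^M = ω^{j N M(M−1)/2} · Id, where ω = exp(2πi/M); equivalently Λ_j^M = (−1)^{j N (M−1)} Id. -/

import Mathlib

open Finset

noncomputable section

/-- Total photon number `|n|`. -/
def totalPhotons {M : ℕ} (n : Fin M → ℕ) : ℕ := ∑ m : Fin M, n m

/-- Clock label `μ(n) = Σ m·n(m)`. -/
def clockLabel {M : ℕ} (n : Fin M → ℕ) : ℕ := ∑ m : Fin M, (m : ℕ) * n m

/-- `ω = exp(2πi/M)`. -/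
def omegaM (M : ℕ) : ℂ := Complex.exp (2 * Real.pi * Complex.I / M)

/-- The Fock space over `M` modes: amplitudes on occupation vectors. -/
abbrev Fock (M : ℕ) := (Fin M → ℕ) → ℂ

/-- Mode-shift operator: `X |n⟩ = |X·n⟩` with `(X·n)(m) = n(m−1)` mod `M`. -/
def fockX {M : ℕ} [NeZero M] (f : Fock M) : Fock M := fun v => f (fun m => v (m + 1))

/-- Phase-shift operator: `Z |n⟩ = ω^{μ(n)} |n⟩`. -/
def fockZ {M : ℕ} (f : Fock M) : Fock M := fun v => omegaM M ^ clockLabel v * f v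

/-- Fock basis state `|n⟩`. -/
def fockDelta {M : ℕ} (n : Fin M → ℕ) : Fock M := fun v => if v = n then 1 else 0

/-- Generalized Pauli operator `Λ_j = X Z^j`, acting by
`Λ_j |n⟩ = ω^{j μ(n)} |X·n⟩`. -/
def fockLambda {M : ℕ} [NeZero M] (j : ℤ) (f : Fock M) : Fock M :=
  fockX (fun v => omegaM M ^ (j * (clockLabel v : ℤ)) * f v)

section Aux

variable {M : ℕ} [NeZero M]

open Fin.NatCast

lemma omegaM_ne_zero : omegaM M ≠ 0 := Complex.exp_ne_zero _

/-- shifted occupation vector `(X·n)(m) = n(m-1)`. -/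
def shiftD (n : Fin M → ℕ) : Fin M → ℕ := fun m => n (m - 1)

lemma fockLambda_delta (j : ℤ) (p : Fin M → ℕ) :
    fockLambda j (fockDelta p)
      = (omegaM M ^ (j * (clockLabel p : ℤ))) • fockDelta (shiftD p) := by
  funext v
  have key : ((fun m => v (m + 1)) = p) ↔ (v = shiftD p) := by
    constructor
    · intro h
      funext m
      have := congrFun h (m - 1)
      simpa [shiftD] using this
    · intro h
      funext m
      simp [h, shiftD]
  simp only [fockLambda, fockX, fockDelta, Pi.smul_apply, smul_eq_mul]
  by_cases h : (fun m => v (m + 1)) = p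
  · rw [if_pos h, if_pos (key.mp h), h]
  · rw [if_neg h, if_neg (fun hh => h (key.mpr hh))]
    ring

lemma fockLambda_smul (j : ℤ) (c : ℂ) (f : Fock M) :
    fockLambda j (c • f) = c • fockLambda j f := by
  funext v
  simp only [fockLambda, fockX, Pi.smul_apply, smul_eq_mul]
  ring

lemma shiftD_iter (k : ℕ) (n : Fin M → ℕ) (m : Fin M) :
    shiftD^[k] n m = n (m - (k : Fin M)) := by
  induction k generalizing m with
  | zero => simp
  | succ k ih =>
      rw [Function.iterate_succ_apply']
      show (shiftD^[k] n) (m - 1) = _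
      rw [ih]
      congr 1
      push_cast
      abel

lemma clockLabel_shiftD_iter (i : ℕ) (n : Fin M → ℕ) :
    clockLabel (shiftD^[i] n)
      = ∑ l : Fin M, ((l + (i : Fin M) : Fin M) : ℕ) * n l := by
  unfold clockLabel
  rw [Fintype.sum_equiv (Equiv.addRight (i : Fin M))
    (fun l => ((l + (i : Fin M) : Fin M) : ℕ) * n l)
    (fun m => (m : ℕ) * (shiftD^[i] n) m)]
  intro l
  simp [shiftD_iter, Equiv.coe_addRight]

lemma fockLambda_iter (j : ℤ) (k : ℕ) (n : Fin M → ℕ) :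
    (fockLambda j (M := M))^[k] (fockDelta n)
      = (omegaM M ^ (j * ((∑ i ∈ range k, clockLabel (shiftD^[i] n) : ℕ) : ℤ)))
          • fockDelta (shiftD^[k] n) := by
  induction k with
  | zero => simp
  | succ k ih =>
      rw [Function.iterate_succ_apply', ih, fockLambda_smul, fockLambda_delta,
        smul_smul, ← zpow_add₀ (omegaM_ne_zero (M := M)), Finset.sum_range_succ]
      rw [show shiftD^[k + 1] n = shiftD (shiftD^[k] n) from
        Function.iterate_succ_apply' _ _ _]
      congr 1
      push_cast
      ring

lemma omegaM_pow_gauss : omegaM M ^ (∑ k ∈ range M, k) = (-1 : ℂ) ^ (M - 1) := by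
  have hM : (M : ℂ) ≠ 0 := Nat.cast_ne_zero.mpr (NeZero.ne M)
  have h2 : ((∑ k ∈ range M, k : ℕ) : ℂ) * 2 = (M : ℂ) * ((M : ℂ) - 1) := by
    have := Finset.sum_range_id_mul_two M
    have h1 : (1 : ℕ) ≤ M := Nat.one_le_iff_ne_zero.mpr (NeZero.ne M)
    have : ((∑ k ∈ range M, k) * 2 : ℕ) = (M * (M - 1) : ℕ) := this
    calc ((∑ k ∈ range M, k : ℕ) : ℂ) * 2 = (((∑ k ∈ range M, k) * 2 : ℕ) : ℂ) := by push_cast; ring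
    _ = ((M * (M - 1) : ℕ) : ℂ) := by rw [this]
    _ = (M : ℂ) * ((M : ℂ) - 1) := by push_cast [h1]; ring
  have hMc : ((M - 1 : ℕ) : ℂ) = (M : ℂ) - 1 := by
    push_cast [Nat.one_le_iff_ne_zero.mpr (NeZero.ne M)]; ring
  rw [omegaM, ← Complex.exp_nat_mul]
  have : ((∑ k ∈ range M, k : ℕ) : ℂ) * (2 * Real.pi * Complex.I / M)
      = ((M - 1 : ℕ) : ℂ) * (Real.pi * Complex.I) := by
    rw [hMc]
    push_cast at h2 ⊢
    field_simp
    linear_combination h2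
  rw [this, Complex.exp_nat_mul, Complex.exp_pi_mul_I]

end Aux

/-- on the `N`-photon Fock space with `M` modes,
`Λ_j^M = (−1)^{jN(M−1)} Id`. -/
theorem fockLambda_pow_M (M N : ℕ) [NeZero M] (j : ℤ) (n : Fin M → ℕ)
    (hn : totalPhotons n = N) :
    (fockLambda j (M := M))^[M] (fockDelta n)
      = ((-1 : ℂ) ^ (j * (N : ℤ) * ((M : ℤ) - 1))) • fockDelta n := by
  have hend : shiftD^[M] n = n := by
    funext m
    rw [shiftD_iter]
    simp
  have hS : (∑ i ∈ range M, clockLabel (shiftD^[i] n)) = (∑ k ∈ range M, k) * N := by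
    calc (∑ i ∈ range M, clockLabel (shiftD^[i] n))
        = ∑ i : Fin M, clockLabel (shiftD^[(i : ℕ)] n) := by
          rw [← Fin.sum_univ_eq_sum_range]
      _ = ∑ i : Fin M, ∑ l : Fin M, ((l + i : Fin M) : ℕ) * n l := by
          refine Finset.sum_congr rfl fun i _ => ?_
          rw [clockLabel_shiftD_iter]
          simp [Fin.cast_val_eq_self]
      _ = ∑ l : Fin M, (∑ i : Fin M, ((l + i : Fin M) : ℕ)) * n l := by
          rw [Finset.sum_comm]
          exact Finset.sum_congr rfl fun l _ => (Finset.sum_mul _ _ _).symm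
      _ = ∑ l : Fin M, (∑ k ∈ range M, k) * n l := by
          refine Finset.sum_congr rfl fun l _ => ?_
          congr 1
          rw [Fintype.sum_equiv (Equiv.addLeft l) (fun i => ((l + i : Fin M) : ℕ))
            (fun k => (k : ℕ)) (fun i => rfl)]
          exact Fin.sum_univ_eq_sum_range (fun k => k) M
      _ = (∑ k ∈ range M, k) * N := by
          rw [← Finset.mul_sum, ← hn, totalPhotons]
  rw [fockLambda_iter, hend, hS]
  congr 1
  have hbase : omegaM M ^ (∑ k ∈ range M, k) = (-1 : ℂ) ^ (M - 1) := omegaM_pow_gauss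
  have h1 : (1 : ℕ) ≤ M := Nat.one_le_iff_ne_zero.mpr (NeZero.ne M)
  have hMZ : ((M : ℤ) - 1) = ((M - 1 : ℕ) : ℤ) := by push_cast [h1]; ring
  calc omegaM M ^ (j * (((∑ k ∈ range M, k) * N : ℕ) : ℤ))
      = omegaM M ^ (((∑ k ∈ range M, k : ℕ) : ℤ) * (j * N)) := by push_cast; ring_nf
    _ = (omegaM M ^ ((∑ k ∈ range M, k : ℕ) : ℤ)) ^ (j * N) := by
        rw [← zpow_mul]
    _ = ((-1 : ℂ) ^ ((M - 1 : ℕ) : ℤ)) ^ (j * N) := by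
        rw [zpow_natCast, hbase, zpow_natCast]
    _ = (-1 : ℂ) ^ (j * (N : ℤ) * ((M : ℤ) - 1)) := by
        rw [← zpow_mul, hMZ]; ring_nf
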